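/- Let C be a clutter with vertex set U ∪ V (disjoint), and {C_u}_{u∈U} non-empty clutters pairwise disjoint from each other and from C. Let C'' = C ∪ ⋃_{u∈U} C_u ∪ ⋃_{u∈U} {{u} ∪ e : e ∈ C_u*}, where C_u* is the set of inclusion-minimal elements of {e \ {x} : x ∈ e ∈ C_u}. Then dim Δ_{C''} = |U| + Σ_{u∈U} dim Δ_{C_u} + dim Δ_{C[V]}. -/

import Mathlib

variable {α : Type*} [DecidableEq α]

/-- `F` is an independent set: a subset of the vertex set `V` containing no circuit of `C`. -/
def IndepOn (V : Finset α) (C : Finset (Finset α)) (F : Finset α) : Prop :=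
  F ⊆ V ∧ ∀ e ∈ C, ¬ e ⊆ F

/-- `F` is a facet of the independence complex: a maximal independent set. -/
def FacetOn (V : Finset α) (C : Finset (Finset α)) (F : Finset α) : Prop :=
  IndepOn V C F ∧ ∀ G, IndepOn V C G → F ⊆ G → F = G

/-- The independence number: the maximum cardinality of an independent set. -/
def indepNum (V : Finset α) (C : Finset (Finset α)) : ℕ :=
  (V.powerset.filter (fun F => ∀ e ∈ C, ¬ e ⊆ F)).sup Finset.card

/-- `C` is a clutter on vertex set `V`: circuits are subsets of `V` forming an antichain
whose union is `V`. -/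
def IsClutterOn (V : Finset α) (C : Finset (Finset α)) : Prop :=
  (∀ e ∈ C, e ⊆ V) ∧ (∀ e ∈ C, ∀ f ∈ C, e ⊆ f → e = f) ∧ (∀ v ∈ V, ∃ e ∈ C, v ∈ e)

open Finset

lemma indep_card_le (V : Finset α) (C : Finset (Finset α)) {F : Finset α}
    (hFV : F ⊆ V) (hF : ∀ e ∈ C, ¬ e ⊆ F) : F.card ≤ indepNum V C :=
  le_sup (f := Finset.card) (mem_filter.2 ⟨mem_powerset.2 hFV, hF⟩)

lemma exists_indep_card (V : Finset α) (C : Finset (Finset α)) (h : ∅ ∉ C) :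
    ∃ F, F ⊆ V ∧ (∀ e ∈ C, ¬ e ⊆ F) ∧ F.card = indepNum V C := by
  obtain ⟨F, hF, hcard⟩ := exists_mem_eq_sup (V.powerset.filter (fun F => ∀ e ∈ C, ¬ e ⊆ F))
    ⟨∅, mem_filter.2 ⟨mem_powerset.2 (empty_subset V),
      fun e he hsub => h (by rwa [Finset.subset_empty.1 hsub] at he)⟩⟩ Finset.card
  rw [mem_filter, mem_powerset] at hF
  exact ⟨F, hF.1, hF.2, hcard.symm⟩

lemma indepNum_eq_zero (V : Finset α) {C : Finset (Finset α)} (h : ∅ ∈ C) :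
    indepNum V C = 0 := by
  unfold indepNum
  rw [Finset.filter_false_of_mem (fun F _ h' => h' ∅ h (empty_subset F)), Finset.sup_empty]
  rfl

lemma exists_minimal_subset (S : Finset (Finset α)) {a : Finset α} (ha : a ∈ S) :
    ∃ g ∈ S, g ⊆ a ∧ ∀ h ∈ S, ¬ h ⊂ g := by
  obtain ⟨m, hm, hmin⟩ := Finset.exists_minimal (s := S.filter (· ⊆ a))
    ⟨a, mem_filter.2 ⟨ha, Finset.Subset.rfl⟩⟩
  rw [mem_filter] at hm
  exact ⟨m, hm.1, hm.2, fun h hh hss =>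
    (Finset.ssubset_iff_subset_ne.1 hss).2
      (Finset.Subset.antisymm hss.subset (hmin (mem_filter.2 ⟨hh, hss.subset.trans hm.2⟩) hss.subset))⟩

lemma crux (Vu : Finset α) (Cu : Finset (Finset α)) (hCl : IsClutterOn Vu Cu)
    (hNe : Cu.Nonempty) {G : Finset α} (hG : G ⊆ Vu)
    (hind : ∀ e ∈ Cu, ¬ e ⊆ G)
    (hst : ∀ g ∈ (Cu.biUnion (fun e => e.image (fun x => e.erase x))).filter
        (fun f => ∀ h ∈ Cu.biUnion (fun e => e.image (fun x => e.erase x)), ¬ h ⊂ f), ¬ g ⊆ G) :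
    G.card + 1 ≤ indepNum Vu Cu := by
  by_contra hcon
  push_neg at hcon
  obtain ⟨e₀, he₀⟩ := hNe
  obtain ⟨v, hv, hvG⟩ := not_subset.1 (hind e₀ he₀)
  have hvV : v ∈ Vu := hCl.1 e₀ he₀ hv
  have hins : ¬ ∀ e ∈ Cu, ¬ e ⊆ insert v G := by
    intro hall
    have := indep_card_le Vu Cu (insert_subset hvV hG) hall
    rw [card_insert_of_notMem hvG] at this
    omega
  push_neg at hins
  obtain ⟨e, he, hsub⟩ := hins
  have hve : v ∈ e := by
    by_contra hne
    exact hind e he (fun x hx => (mem_insert.1 (hsub hx)).resolve_left (fun h => hne (h ▸ hx)))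
  have herase : e.erase v ⊆ G := fun x hx => by
    rcases mem_insert.1 (hsub (mem_of_mem_erase hx)) with h | h
    · exact absurd h (ne_of_mem_erase hx)
    · exact h
  have hmem : e.erase v ∈ Cu.biUnion (fun e => e.image (fun x => e.erase x)) :=
    mem_biUnion.2 ⟨e, he, mem_image.2 ⟨v, hve, rfl⟩⟩
  obtain ⟨g, hg, hga, hgm⟩ := exists_minimal_subset _ hmem
  exact hst g (mem_filter.2 ⟨hg, hgm⟩) (hga.trans herase)

open Finset in
/-- Third construction, dimension formula: for
`C'' = C ∪ ⋃_{u∈U} C_u ∪ ⋃_{u∈U} {{u} ∪ e : e ∈ C_u*}`,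
`dim Δ_{C''} = |U| + Σ_{u∈U} dim Δ_{C_u} + dim Δ_{C[V]}` (with `dim Δ = indepNum − 1`). -/
theorem dim_third_construction (U V : Finset α) (hUV : Disjoint U V)
    (C : Finset (Finset α)) (hC : IsClutterOn (U ∪ V) C)
    (Vu : α → Finset α) (Cu : α → Finset (Finset α))
    (hCu : ∀ u ∈ U, IsClutterOn (Vu u) (Cu u))
    (hCuNe : ∀ u ∈ U, (Cu u).Nonempty)
    (hCuE : ∀ u ∈ U, ∀ e ∈ Cu u, e.Nonempty)
    (hdisj : ∀ u ∈ U, Disjoint (Vu u) (U ∪ V))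
    (hpair : ∀ u ∈ U, ∀ u' ∈ U, u ≠ u' → Disjoint (Vu u) (Vu u'))
    (Cstar : α → Finset (Finset α))
    (hstar : ∀ u ∈ U, Cstar u =
      ((Cu u).biUnion (fun e => e.image (fun x => e.erase x))).filter
        (fun f => ∀ g ∈ (Cu u).biUnion (fun e => e.image (fun x => e.erase x)), ¬ g ⊂ f)) :
    ((indepNum ((U ∪ V) ∪ U.biUnion Vu)
        (C ∪ U.biUnion Cu ∪ U.biUnion (fun u => (Cstar u).image (insert u))) : ℤ) - 1) =
      (U.card : ℤ) + (∑ u ∈ U, ((indepNum (Vu u) (Cu u) : ℤ) - 1)) +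
        ((indepNum V (C.filter (fun e => e ⊆ V)) : ℤ) - 1) := by
  classical
  set D := C.filter (fun e => e ⊆ V) with hDdef
  set W := (U ∪ V) ∪ U.biUnion Vu with hWdef
  set C'' := C ∪ U.biUnion Cu ∪ U.biUnion (fun u => (Cstar u).image (insert u)) with hC''def
  have key : indepNum W C'' = (∑ u ∈ U, indepNum (Vu u) (Cu u)) + indepNum V D := by
    by_cases hemp : ∅ ∈ C
    · -- degenerate case: C = {∅}, U ∪ V = ∅
      have hU : U = ∅ := by
        rw [Finset.eq_empty_iff_forall_notMem]
        intro v hv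
        obtain ⟨e, he, hve⟩ := hC.2.2 v (mem_union_left V hv)
        rw [← hC.2.1 ∅ hemp e he (empty_subset e)] at hve
        exact notMem_empty v hve
      have h1 : indepNum W C'' = 0 :=
        indepNum_eq_zero W (mem_union_left _ (mem_union_left _ hemp))
      have h2 : indepNum V D = 0 :=
        indepNum_eq_zero V (by rw [hDdef]; exact mem_filter.2 ⟨hemp, empty_subset V⟩)
      rw [h1, h2, hU]
      simp
    · -- main case
      have hD0 : ∅ ∉ D := fun h => hemp (mem_filter.1 h).1
      obtain ⟨IV, hIV1, hIV2, hIV3⟩ := exists_indep_card V D hD0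
      have hex : ∀ u, ∃ I : Finset α, u ∈ U →
          I ⊆ Vu u ∧ (∀ e ∈ Cu u, ¬ e ⊆ I) ∧ I.card = indepNum (Vu u) (Cu u) := by
        intro u
        by_cases hu : u ∈ U
        · obtain ⟨I, h1, h2, h3⟩ := exists_indep_card (Vu u) (Cu u)
            (fun h => by simpa using hCuE u hu ∅ h)
          exact ⟨I, fun _ => ⟨h1, h2, h3⟩⟩
        · exact ⟨∅, fun h => absurd h hu⟩
      choose I hI using hex
      -- lower bound
      have hIsub : ∀ u ∈ U, I u ⊆ Vu u := fun u hu => (hI u hu).1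
      set F := IV ∪ U.biUnion I with hFdef
      have hFU : ∀ x ∈ F, x ∈ IV ∨ ∃ u ∈ U, x ∈ I u := by
        intro x hx
        rcases mem_union.1 hx with h | h
        · exact Or.inl h
        · obtain ⟨u, hu, hxu⟩ := mem_biUnion.1 h
          exact Or.inr ⟨u, hu, hxu⟩
      have hFW : F ⊆ W := by
        intro x hx
        rcases hFU x hx with h | ⟨u, hu, h⟩
        · exact mem_union_left _ (mem_union_right _ (hIV1 h))
        · exact mem_union_right _ (mem_biUnion.2 ⟨u, hu, hIsub u hu h⟩)
      have hFind : ∀ e ∈ C'', ¬ e ⊆ F := by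
        intro e he hsub
        rcases mem_union.1 he with he' | he'
        · rcases mem_union.1 he' with heC | heCu
          · -- e ∈ C
            have heV : e ⊆ IV := by
              intro x hx
              rcases hFU x (hsub hx) with h | ⟨u, hu, h⟩
              · exact h
              · exact absurd (hC.1 e heC hx) (Finset.disjoint_left.1 (hdisj u hu) (hIsub u hu h))
            exact hIV2 e (mem_filter.2 ⟨heC, heV.trans hIV1⟩) heV
          · -- e ∈ Cu u
            obtain ⟨u, hu, heu⟩ := mem_biUnion.1 heCu
            have heI : e ⊆ I u := by
              intro x hx
              have hxVu : x ∈ Vu u := (hCu u hu).1 e heu hx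
              rcases hFU x (hsub hx) with h | ⟨u', hu', h⟩
              · exact absurd (mem_union_right U (hIV1 h))
                  (Finset.disjoint_left.1 (hdisj u hu) hxVu)
              · rcases eq_or_ne u u' with rfl | hne
                · exact h
                · exact absurd (hIsub u' hu' h)
                    (Finset.disjoint_left.1 (hpair u hu u' hu' hne) hxVu)
            exact (hI u hu).2.1 e heu heI
        · -- e = insert u g
          obtain ⟨u, hu, heu⟩ := mem_biUnion.1 he'
          obtain ⟨g, _, rfl⟩ := mem_image.1 heu
          have huF : u ∈ F := hsub (mem_insert_self u g)
          rcases hFU u huF with h | ⟨u', hu', h⟩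
          · exact absurd (hIV1 h) (Finset.disjoint_left.1 hUV hu)
          · exact absurd (mem_union_left V hu)
              (Finset.disjoint_left.1 (hdisj u' hu') (hIsub u' hu' h))
      have hdisjIV : Disjoint IV (U.biUnion I) := by
        rw [Finset.disjoint_left]
        intro x hx hx'
        obtain ⟨u, hu, hxu⟩ := mem_biUnion.1 hx'
        exact Finset.disjoint_left.1 (hdisj u hu) (hIsub u hu hxu)
          (mem_union_right U (hIV1 hx))
      have hcardF : F.card = IV.card + ∑ u ∈ U, (I u).card := by
        rw [hFdef, card_union_of_disjoint hdisjIV, card_biUnion]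
        intro u hu u' hu' hne
        exact Finset.disjoint_of_subset_left (hIsub u hu)
          (Finset.disjoint_of_subset_right (hIsub u' hu') (hpair u hu u' hu' hne))
      have hlow : (∑ u ∈ U, indepNum (Vu u) (Cu u)) + indepNum V D ≤ indepNum W C'' := by
        have := indep_card_le W C'' hFW hFind
        rw [hcardF, hIV3] at this
        have hsumeq : ∑ u ∈ U, (I u).card = ∑ u ∈ U, indepNum (Vu u) (Cu u) :=
          Finset.sum_congr rfl (fun u hu => (hI u hu).2.2)
        rw [hsumeq] at this
        omega
      -- upper bound
      have hup : indepNum W C'' ≤ (∑ u ∈ U, indepNum (Vu u) (Cu u)) + indepNum V D := by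
        apply Finset.sup_le
        intro G hG
        rw [mem_filter, mem_powerset] at hG
        obtain ⟨hGW, hGind⟩ := hG
        have hblock : ∀ u ∈ U,
            (if u ∈ G then 1 else 0) + (G ∩ Vu u).card ≤ indepNum (Vu u) (Cu u) := by
          intro u hu
          have hinter : G ∩ Vu u ⊆ Vu u := inter_subset_right
          have hindu : ∀ e ∈ Cu u, ¬ e ⊆ G ∩ Vu u := by
            intro e he hsub
            exact hGind e (mem_union_left _ (mem_union_right _ (mem_biUnion.2 ⟨u, hu, he⟩)))
              (hsub.trans inter_subset_left)
          by_cases huG : u ∈ G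
          · rw [if_pos huG, add_comm]
            apply crux (Vu u) (Cu u) (hCu u hu) (hCuNe u hu) hinter hindu
            intro g hg hgsub
            have hgC : insert u g ∈ C'' := mem_union_right _
              (mem_biUnion.2 ⟨u, hu, mem_image.2 ⟨g, by rw [hstar u hu]; exact hg, rfl⟩⟩)
            exact hGind _ hgC (insert_subset huG (hgsub.trans inter_subset_left))
          · rw [if_neg huG, zero_add]
            exact indep_card_le _ _ hinter hindu
        have hGV : (G ∩ V).card ≤ indepNum V D := by
          apply indep_card_le _ _ inter_subset_right
          intro e he hsub
          exact hGind e (mem_union_left _ (mem_union_left _ (mem_filter.1 he).1))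
            (hsub.trans inter_subset_left)
        have hcover : G ⊆ (G ∩ U) ∪ (G ∩ V) ∪ U.biUnion (fun u => G ∩ Vu u) := by
          intro x hx
          rcases mem_union.1 (hGW hx) with h | h
          · rcases mem_union.1 h with h' | h'
            · exact mem_union_left _ (mem_union_left _ (mem_inter.2 ⟨hx, h'⟩))
            · exact mem_union_left _ (mem_union_right _ (mem_inter.2 ⟨hx, h'⟩))
          · obtain ⟨u, hu, hxu⟩ := mem_biUnion.1 h
            exact mem_union_right _ (mem_biUnion.2 ⟨u, hu, mem_inter.2 ⟨hx, hxu⟩⟩)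
        have hcard : G.card ≤ (G ∩ U).card + (G ∩ V).card + ∑ u ∈ U, (G ∩ Vu u).card := by
          calc G.card ≤ ((G ∩ U) ∪ (G ∩ V) ∪ U.biUnion (fun u => G ∩ Vu u)).card :=
                card_le_card hcover
            _ ≤ ((G ∩ U) ∪ (G ∩ V)).card + (U.biUnion (fun u => G ∩ Vu u)).card :=
                card_union_le _ _
            _ ≤ (G ∩ U).card + (G ∩ V).card + (U.biUnion (fun u => G ∩ Vu u)).card := by
                exact add_le_add_left (card_union_le _ _) _
            _ ≤ (G ∩ U).card + (G ∩ V).card + ∑ u ∈ U, (G ∩ Vu u).card := by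
                exact add_le_add_right (card_biUnion_le) _
        have hGU : (G ∩ U).card = ∑ u ∈ U, if u ∈ G then 1 else 0 := by
          rw [inter_comm, ← Finset.filter_mem_eq_inter, Finset.card_filter]
        have hmain : (G ∩ U).card + ∑ u ∈ U, (G ∩ Vu u).card
            ≤ ∑ u ∈ U, indepNum (Vu u) (Cu u) := by
          rw [hGU, ← Finset.sum_add_distrib]
          exact Finset.sum_le_sum hblock
        omega
      omega
  have keyZ : (indepNum W C'' : ℤ)
      = (∑ u ∈ U, (indepNum (Vu u) (Cu u) : ℤ)) + (indepNum V D : ℤ) := by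
    exact_mod_cast key
  have hsum : ∑ u ∈ U, ((indepNum (Vu u) (Cu u) : ℤ) - 1)
      = (∑ u ∈ U, (indepNum (Vu u) (Cu u) : ℤ)) - U.card := by
    rw [Finset.sum_sub_distrib, Finset.sum_const, nsmul_eq_mul, mul_one]
  rw [hsum]
  linarith [keyZ]
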